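/- Let P be an NN-bisimulation for a neural network N and let v be a P-consistent input valuation. Then the input-output semantics commute with abstraction: α([[N]](v)) = [[N/P]](α(v)), where [[N]] is the composition of all k layer semantics. -/
import Mathlib


/-- One-step (layer) semantics of a neural network layer. -/
def layerSem {α β : Type*} [Fintype α] (W : α → β → ℝ) (b : β → ℝ) (A : β → ℝ → ℝ)
    (v : α → ℝ) : β → ℝ :=
  fun s' => A s' ((∑ s, W s s' * v s) + b s')

open Classical in
/-- Pre-sum of a set of previous-layer nodes into a node `s'`. -/
noncomputable def preSum {α β : Type*} [Fintype α] (W : α → β → ℝ) (c : Set α) (s' : β) : ℝ :=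
  ∑ s ∈ Finset.univ.filter (fun s => s ∈ c), W s s'

/-- A valuation is `P`-consistent if it is constant on classes. -/
def consistent {α : Type*} (P : Setoid α) (v : α → ℝ) : Prop :=
  ∀ s₁ s₂, P.r s₁ s₂ → v s₁ = v s₂

/-- One layer of the NN-bisimulation condition. -/
def isBisimStep {α β : Type*} [Fintype α] (W : α → β → ℝ) (b : β → ℝ) (A : β → ℝ → ℝ)
    (Pp : Setoid α) (Pn : Setoid β) : Prop :=
  ∀ s₁ s₂ : β, Pn.r s₁ s₂ →
    A s₁ = A s₂ ∧ b s₁ = b s₂ ∧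
    ∀ t : α, preSum W {x | Pp.r x t} s₁ = preSum W {x | Pp.r x t} s₂

/-- One layer of the δ-NN-bisimulation condition. -/
def isDeltaBisimStep {α β : Type*} [Fintype α] (W : α → β → ℝ) (b : β → ℝ) (A : β → ℝ → ℝ)
    (Pp : Setoid α) (Pn : Setoid β) (δ : ℝ) : Prop :=
  ∀ s₁ s₂ : β, Pn.r s₁ s₂ →
    A s₁ = A s₂ ∧ |b s₁ - b s₂| ≤ δ ∧
    ∀ t : α, |preSum W {x | Pp.r x t} s₁ - preSum W {x | Pp.r x t} s₂| ≤ δ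

/-- Semantics of the composition of the first `i` layers of a network. -/
def netSem (S : ℕ → Type) [∀ i, Fintype (S i)] (W : ∀ i, S i → S (i+1) → ℝ)
    (b : ∀ i, S (i+1) → ℝ) (A : ∀ i, S (i+1) → ℝ → ℝ) : (i : ℕ) → (S 0 → ℝ) → S i → ℝ
  | 0, v => v
  | (i+1), v => layerSem (W i) (b i) (A i) (netSem S W b A i v)

/-- Quotient weights: pre-sum of a class into a representative. -/
noncomputable def qW {α β : Type*} [Fintype α] (Pp : Setoid α) (Pn : Setoid β)
    (W : α → β → ℝ) (c : Quotient Pp) (d : Quotient Pn) : ℝ :=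
  preSum W {x | Quotient.mk Pp x = c} d.out

/-- Quotient bias via representative. -/
noncomputable def qb {β : Type*} (Pn : Setoid β) (b : β → ℝ) (d : Quotient Pn) : ℝ := b d.out

/-- Quotient activation via representative. -/
noncomputable def qA {β : Type*} (Pn : Setoid β) (A : β → ℝ → ℝ) (d : Quotient Pn) : ℝ → ℝ :=
  A d.out

/-- Abstraction of a `P`-consistent valuation. -/
noncomputable def absVal {α : Type*} (P : Setoid α) (v : α → ℝ) (c : Quotient P) : ℝ := v c.out

/-- `vh` is an ε-abstraction of `v`. -/
def isEpsAbs {α : Type*} (P : Setoid α) (ε : ℝ) (v : α → ℝ) (vh : Quotient P → ℝ) : Prop :=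
  ∀ s : α, |vh (Quotient.mk P s) - v s| ≤ ε

/-- `v` is (ε,P)-consistent. -/
def epsConsistent {α : Type*} (P : Setoid α) (ε : ℝ) (v : α → ℝ) : Prop :=
  ∀ s₁ s₂, P.r s₁ s₂ → |v s₁ - v s₂| ≤ ε


open Classical in
lemma preSum_class_eq {α β : Type*} [Fintype α] (W : α → β → ℝ) (Pp : Setoid α)
    (c : Quotient Pp) (s' : β) :
    preSum W {x | Quotient.mk Pp x = c} s' = preSum W {x | Pp.r x c.out} s' := by
  unfold preSum
  refine Finset.sum_congr ?_ (fun _ _ => rfl)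
  ext x
  simp only [Finset.mem_filter, Set.mem_setOf_eq, Finset.mem_univ, true_and]
  constructor
  · intro h; exact Quotient.exact (h.trans c.out_eq.symm)
  · intro h; exact (Quotient.sound h).trans c.out_eq

open Classical in
lemma sum_regroup {α : Type*} [Fintype α] {β : Type*} (W : α → β → ℝ) (Pp : Setoid α)
    [Fintype (Quotient Pp)] (u : α → ℝ) (hu : consistent Pp u) (s' : β) :
    ∑ s, W s s' * u s =
      ∑ c : Quotient Pp, preSum W {x | Quotient.mk Pp x = c} s' * u c.out := by
  rw [← Finset.sum_fiberwise Finset.univ (fun s => Quotient.mk Pp s) (fun s => W s s' * u s)]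
  apply Finset.sum_congr rfl
  intro c _
  rw [preSum, Finset.sum_mul]
  refine Finset.sum_congr ?_ fun s hs => ?_
  · ext x; simp [Set.mem_setOf_eq]
  · simp only [Finset.mem_filter, Set.mem_setOf_eq] at hs
    congr 1
    exact hu s c.out (Quotient.exact (hs.2.trans c.out_eq.symm))

lemma layerSem_consistent {α β : Type*} [Fintype α]
    {Pp : Setoid α} {Pn : Setoid β} [Fintype (Quotient Pp)]
    (W : α → β → ℝ) (b : β → ℝ) (A : β → ℝ → ℝ)
    (hbis : isBisimStep W b A Pp Pn) (u : α → ℝ) (hu : consistent Pp u) :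
    consistent Pn (layerSem W b A u) := by
  intro s₁ s₂ h
  obtain ⟨hA, hb, hw⟩ := hbis s₁ s₂ h
  unfold layerSem
  rw [hA, hb]
  congr 2
  rw [sum_regroup W Pp u hu s₁, sum_regroup W Pp u hu s₂]
  apply Finset.sum_congr rfl
  intro c _
  rw [preSum_class_eq, preSum_class_eq, hw c.out]

lemma netSem_consistent (S : ℕ → Type) [∀ i, Fintype (S i)]
    (P : ∀ i, Setoid (S i)) [∀ i, Fintype (Quotient (P i))]
    (W : ∀ i, S i → S (i+1) → ℝ) (b : ∀ i, S (i+1) → ℝ) (A : ∀ i, S (i+1) → ℝ → ℝ)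
    (hbis : ∀ i, isBisimStep (W i) (b i) (A i) (P i) (P (i+1)))
    (k : ℕ) (v : S 0 → ℝ) (hv : consistent (P 0) v) :
    consistent (P k) (netSem S W b A k v) := by
  induction k with
  | zero => exact hv
  | succ k ih => exact layerSem_consistent (W k) (b k) (A k) (hbis k) _ ih

/-- abstraction commutes with the full input-output semantics:
`α([[N]](v)) = [[N/P]](α(v))` for `P`-consistent input `v`. -/
theorem quotient_net_commutes (S : ℕ → Type) [∀ i, Fintype (S i)]
    (P : ∀ i, Setoid (S i)) [∀ i, Fintype (Quotient (P i))]
    (W : ∀ i, S i → S (i+1) → ℝ) (b : ∀ i, S (i+1) → ℝ) (A : ∀ i, S (i+1) → ℝ → ℝ)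
    (hbis : ∀ i, isBisimStep (W i) (b i) (A i) (P i) (P (i+1)))
    (k : ℕ) (v : S 0 → ℝ) (hv : consistent (P 0) v) :
    absVal (P k) (netSem S W b A k v) =
      netSem (fun i => Quotient (P i)) (fun i => qW (P i) (P (i+1)) (W i))
        (fun i => qb (P (i+1)) (b i)) (fun i => qA (P (i+1)) (A i)) k (absVal (P 0) v) := by
  induction k with
  | zero => rfl
  | succ k ih =>
    funext d
    have hu := netSem_consistent S P W b A hbis k v hv
    have hb := hbis k d.out d.out (Setoid.refl _)
    show layerSem (W k) (b k) (A k) (netSem S W b A k v) d.out = _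
    unfold layerSem
    show A k d.out _ = qA (P (k+1)) (A k) d _
    unfold qA qb
    congr 1
    congr 1
    rw [sum_regroup (W k) (P k) _ hu d.out]
    apply Finset.sum_congr rfl
    intro c _
    exact congrArg (fun x => qW (P k) (P (k+1)) (W k) c d * x) (congrFun ih c)
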